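/- Under the BC-RED assumptions, let x* ∈ zer(G), let i ∈ {1,…,b}, and let x⁺ = x − γ U_i G_i(x) be a single BC-RED update with step-size 0 < γ ≤ 1/(L_max + 2τ). If additionally x − x* is supported on block i (i.e., x = x* + U_i h_i for some h_i ∈ ℝ^{n_i}), then ‖x⁺ − x*‖² ≤ ‖x − x*‖² − (γ/(L_max + 2τ)) ‖G_i(x)‖². -/

import Mathlib

open scoped RealInnerProductSpace BigOperators

noncomputable section

/-- The `i`-th block of `ℝ^n = ℝ^{n 0} × ⋯ × ℝ^{n (b-1)}`. -/
abbrev Blk {b : ℕ} (n : Fin b → ℕ) (i : Fin b) := EuclideanSpace ℝ (Fin (n i))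

/-- The full space `ℝ^n` decomposed into `b` blocks. -/
abbrev FullSpace {b : ℕ} (n : Fin b → ℕ) := PiLp 2 fun i => Blk n i

/-- `U_i : ℝ^{n_i} → ℝ^n`, the injection of the `i`-th block (zero elsewhere). -/
noncomputable def blockInj {b : ℕ} (n : Fin b → ℕ) (i : Fin b) (h : Blk n i) :
    FullSpace n := WithLp.toLp 2 (Pi.single i h)

/-- `U_iᵀ : ℝ^n → ℝ^{n_i}`, extraction of the `i`-th block. -/
def blockExt {b : ℕ} (n : Fin b → ℕ) (i : Fin b) (x : FullSpace n) : Blk n i := x i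

/-- `T_i : ℝ^n → ℝ^{n_i}` is block Lipschitz continuous with constant `lam`:
`‖T_i(y + U_i h) − T_i(y)‖ ≤ lam * ‖h‖` for all `y ∈ ℝ^n`, `h ∈ ℝ^{n_i}`.
Block nonexpansive means `lam = 1`. -/
def BlockLipschitz {b : ℕ} (n : Fin b → ℕ) (i : Fin b)
    (T : FullSpace n → Blk n i) (lam : ℝ) : Prop :=
  ∀ (y : FullSpace n) (h : Blk n i), ‖T (y + blockInj n i h) - T y‖ ≤ lam * ‖h‖

/-- `T_i : ℝ^n → ℝ^{n_i}` is block `β`-cocoercive: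
`⟨T_i(y + U_i h) − T_i(y), h⟩ ≥ β‖T_i(y + U_i h) − T_i(y)‖²`. -/
def BlockCocoercive {b : ℕ} (n : Fin b → ℕ) (i : Fin b)
    (T : FullSpace n → Blk n i) (β : ℝ) : Prop :=
  ∀ (y : FullSpace n) (h : Blk n i),
    β * ‖T (y + blockInj n i h) - T y‖ ^ 2 ≤ ⟪T (y + blockInj n i h) - T y, h⟫

section Helpers
open Set

variable {b : ℕ} {n : Fin b → ℕ} {i : Fin b}

lemma blockInj_add' (n : Fin b → ℕ) (i : Fin b) (u v : Blk n i) :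
    blockInj n i (u + v) = blockInj n i u + blockInj n i v := by
  simp [blockInj, Pi.single_add]

lemma blockInj_smul' (n : Fin b → ℕ) (i : Fin b) (t : ℝ) (u : Blk n i) :
    blockInj n i (t • u) = t • blockInj n i u := by
  simp [blockInj, Pi.single_smul]

lemma blockInj_sub' (n : Fin b → ℕ) (i : Fin b) (u v : Blk n i) :
    blockInj n i (u - v) = blockInj n i u - blockInj n i v := by
  simp [blockInj, Pi.single_sub]

lemma inner_blockInj' (n : Fin b → ℕ) (i : Fin b) (u : Blk n i) (z : FullSpace n) :
    ⟪blockInj n i u, z⟫ = ⟪u, blockExt n i z⟫ := by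
  rw [PiLp.inner_apply]
  rw [Finset.sum_eq_single i]
  · simp [blockInj, blockExt]
  · intro j _ hj
    simp [blockInj, Pi.single_eq_of_ne hj]
  · simp

lemma norm_blockInj' (n : Fin b → ℕ) (i : Fin b) (u : Blk n i) :
    ‖blockInj n i u‖ = ‖u‖ := by
  have h1 : ‖blockInj n i u‖ ^ 2 = ‖u‖ ^ 2 := by
    rw [← real_inner_self_eq_norm_sq, ← real_inner_self_eq_norm_sq, inner_blockInj']
    simp [blockInj, blockExt]
  nlinarith [norm_nonneg (blockInj n i u), norm_nonneg u]

/-- Directional derivative of a differentiable function along a line. -/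
lemma hasDerivAt_line' {F : Type*} [NormedAddCommGroup F] [InnerProductSpace ℝ F]
    [CompleteSpace F] {g : F → ℝ} (hg : Differentiable ℝ g) (c w : F) (t : ℝ) :
    HasDerivAt (fun s : ℝ => g (c + s • w)) ⟪gradient g (c + t • w), w⟫ t := by
  have h2 : HasFDerivAt g (InnerProductSpace.toDual ℝ F (gradient g (c + t • w))) (c + t • w) :=
    ((hg (c + t • w)).hasGradientAt).hasFDerivAt
  have h3 : HasDerivAt (fun s : ℝ => c + s • w) w t := by
    simpa using ((hasDerivAt_id t).smul_const w).const_add c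
  exact h2.comp_hasDerivAt t h3

/-- One-dimensional descent lemma. -/
lemma descent_1d' {ψ ψ' : ℝ → ℝ} (hψ : ∀ t, HasDerivAt ψ (ψ' t) t) (C : ℝ)
    (hb : ∀ t ∈ Icc (0:ℝ) 1, ψ' t ≤ ψ' 0 + C * t) :
    ψ 1 ≤ ψ 0 + ψ' 0 + C / 2 := by
  set χ : ℝ → ℝ := fun t => ψ t - ψ' 0 * t - C * t ^ 2 / 2 with hχ
  have hχd : ∀ t, HasDerivAt χ (ψ' t - ψ' 0 - C * t) t := by
    intro t
    have := ((hψ t).sub (((hasDerivAt_id t).const_mul (ψ' 0)))).sub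
      (((hasDerivAt_pow 2 t).const_mul C).div_const 2)
    exact this.congr_deriv (by rw [show (2:ℕ) - 1 = 1 from rfl]; push_cast; ring)
  have hanti : AntitoneOn χ (Icc (0:ℝ) 1) := by
    apply antitoneOn_of_deriv_nonpos (convex_Icc 0 1)
    · exact fun t _ => (hχd t).continuousAt.continuousWithinAt
    · intro t ht
      exact ((hχd t).differentiableAt).differentiableWithinAt
    · intro t ht
      rw [interior_Icc] at ht
      rw [(hχd t).deriv]
      have := hb t ⟨le_of_lt ht.1, le_of_lt ht.2⟩
      linarith
  have := hanti (left_mem_Icc.2 zero_le_one) (right_mem_Icc.2 zero_le_one) zero_le_one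
  simp only [hχ] at this
  nlinarith

/-- One-dimensional first-order convexity inequality. -/
lemma convex_first_order_1d' {ψ ψ' : ℝ → ℝ} (hconv : ConvexOn ℝ univ ψ)
    (hψ : HasDerivAt ψ (ψ' 0) 0) : ψ 0 + ψ' 0 ≤ ψ 1 := by
  have := hconv.le_slope_of_hasDerivAt (mem_univ 0) (mem_univ 1) one_pos hψ
  rw [slope_def_field] at this
  simp at this
  linarith

/-- Blockwise descent lemma. -/
lemma block_descent' {g : FullSpace n → ℝ} (hg : Differentiable ℝ g) {Lmax : ℝ}
    (hlip : BlockLipschitz n i (fun x => blockExt n i (gradient g x)) Lmax)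
    (c : FullSpace n) (d : Blk n i) :
    g (c + blockInj n i d) ≤ g c + ⟪blockExt n i (gradient g c), d⟫ + Lmax / 2 * ‖d‖ ^ 2 := by
  set w := blockInj n i d with hw
  have key : ∀ t : ℝ, ⟪gradient g (c + t • w), w⟫
      = ⟪blockExt n i (gradient g (c + blockInj n i (t • d))), d⟫ := by
    intro t
    rw [blockInj_smul', ← hw, real_inner_comm, inner_blockInj', real_inner_comm]
  have hψ : ∀ t : ℝ, HasDerivAt (fun s : ℝ => g (c + s • w))
      (⟪blockExt n i (gradient g (c + blockInj n i (t • d))), d⟫) t := by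
    intro t
    have := hasDerivAt_line' hg c w t
    rwa [key t] at this
  have hb : ∀ t ∈ Icc (0:ℝ) 1,
      ⟪blockExt n i (gradient g (c + blockInj n i (t • d))), d⟫
        ≤ ⟪blockExt n i (gradient g (c + blockInj n i ((0:ℝ) • d))), d⟫
          + (Lmax * ‖d‖ ^ 2) * t := by
    intro t ht
    have h0 : blockInj n i ((0:ℝ) • d) = 0 := by
      rw [blockInj_smul']; simp
    rw [h0, add_zero]
    have hcs : ⟪blockExt n i (gradient g (c + blockInj n i (t • d)))
        - blockExt n i (gradient g c), d⟫
        ≤ ‖blockExt n i (gradient g (c + blockInj n i (t • d)))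
        - blockExt n i (gradient g c)‖ * ‖d‖ := real_inner_le_norm _ _
    have hl := hlip c (t • d)
    simp only at hl
    have hn : ‖t • d‖ = t * ‖d‖ := by
      rw [norm_smul, Real.norm_eq_abs, abs_of_nonneg ht.1]
    rw [inner_sub_left] at hcs
    have hdn : (0:ℝ) ≤ ‖d‖ := norm_nonneg d
    rw [hn] at hl
    nlinarith [hcs, hl, hdn, mul_le_mul_of_nonneg_right hl hdn]
  have := descent_1d' hψ (Lmax * ‖d‖ ^ 2) hb
  simp only [one_smul, zero_smul, add_zero] at this
  have h00 : blockInj n i (0 : Blk n i) = 0 := by simp [blockInj]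
  rw [h00, add_zero] at this
  calc g (c + w) ≤ g c + ⟪blockExt n i (gradient g c), d⟫ + Lmax * ‖d‖ ^ 2 / 2 := this
    _ = g c + ⟪blockExt n i (gradient g c), d⟫ + Lmax / 2 * ‖d‖ ^ 2 := by ring

/-- Blockwise first-order convexity inequality. -/
lemma block_first_order' {g : FullSpace n → ℝ} (hg : Differentiable ℝ g)
    (hconv : ConvexOn ℝ univ g) (c : FullSpace n) (d : Blk n i) :
    g c + ⟪blockExt n i (gradient g c), d⟫ ≤ g (c + blockInj n i d) := by
  set w := blockInj n i d with hw
  have hψconv : ConvexOn ℝ univ (fun s : ℝ => g (c + s • w)) := by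
    have := hconv.comp_affineMap (AffineMap.lineMap c (c + w) : ℝ →ᵃ[ℝ] FullSpace n)
    have he : (g ∘ (AffineMap.lineMap c (c + w) : ℝ →ᵃ[ℝ] FullSpace n))
        = fun s : ℝ => g (c + s • w) := by
      funext s
      simp [AffineMap.lineMap_apply]
      rw [add_comm]
    rw [he] at this
    simpa using this
  have hd : HasDerivAt (fun s : ℝ => g (c + s • w)) ⟪gradient g c, w⟫ 0 := by
    have := hasDerivAt_line' hg c w 0
    simpa using this
  have hd' : ⟪gradient g c, w⟫ = ⟪blockExt n i (gradient g c), d⟫ := by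
    rw [real_inner_comm, inner_blockInj', real_inner_comm]
  rw [hd'] at hd
  have := convex_first_order_1d'
    (ψ' := fun _ => ⟪blockExt n i (gradient g c), d⟫) hψconv hd
  simpa using this

/-- Blockwise Baillon–Haddad: the block gradient of a convex function with
`Lmax`-Lipschitz block gradients is block `1/Lmax`-cocoercive. -/
lemma block_BH' {g : FullSpace n → ℝ} (hg : Differentiable ℝ g)
    (hconv : ConvexOn ℝ univ g) {Lmax : ℝ} (hL : 0 < Lmax)
    (hlip : BlockLipschitz n i (fun x => blockExt n i (gradient g x)) Lmax)
    (xs : FullSpace n) (h : Blk n i) :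
    (1 / Lmax) * ‖blockExt n i (gradient g (xs + blockInj n i h))
        - blockExt n i (gradient g xs)‖ ^ 2
      ≤ ⟪blockExt n i (gradient g (xs + blockInj n i h))
        - blockExt n i (gradient g xs), h⟫ := by
  set x := xs + blockInj n i h with hx
  set a := blockExt n i (gradient g x) with ha
  set b' := blockExt n i (gradient g xs) with hb'
  set e := a - b' with he
  set lI := Lmax⁻¹ with hlI
  have hlIpos : 0 ≤ lI := le_of_lt (inv_pos.2 hL)
  have hLlI : Lmax * lI = 1 := mul_inv_cancel₀ (ne_of_gt hL)
  set s : Blk n i := -(lI • e) with hs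
  set s' : Blk n i := lI • e with hs'
  set A := ⟪a, e⟫ with hA
  set B := ⟪b', e⟫ with hB
  set N := ‖e‖ ^ 2 with hN
  have hNAB : A - B = N := by
    rw [hA, hB, hN, ← inner_sub_left, ← he, real_inner_self_eq_norm_sq]
  have hnorms : ‖s‖ ^ 2 = lI ^ 2 * N := by
    rw [hs, norm_neg, norm_smul, Real.norm_eq_abs, abs_of_nonneg hlIpos, hN]; ring
  have hnorms' : ‖s'‖ ^ 2 = lI ^ 2 * N := by
    rw [hs', norm_smul, Real.norm_eq_abs, abs_of_nonneg hlIpos, hN]; ring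
  have hquad : Lmax / 2 * (lI ^ 2 * N) = lI * N / 2 := by
    have : Lmax * lI ^ 2 = lI := by
      rw [pow_two, ← mul_assoc, hLlI, one_mul]
    calc Lmax / 2 * (lI ^ 2 * N) = Lmax * lI ^ 2 * N / 2 := by ring
      _ = lI * N / 2 := by rw [this]
  have desc1 := block_descent' hg hlip x s
  have desc2 := block_descent' hg hlip xs s'
  have fo1 := block_first_order' hg hconv xs (h + s)
  have fo2 := block_first_order' hg hconv x (s' - h)
  have hpt1 : xs + blockInj n i (h + s) = x + blockInj n i s := by
    rw [blockInj_add', hx, add_assoc]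
  have hpt2 : x + blockInj n i (s' - h) = xs + blockInj n i s' := by
    rw [hx, add_assoc, ← blockInj_add']
    have : h + (s' - h) = s' := by abel
    rw [this]
  rw [hpt1] at fo1
  rw [hpt2] at fo2
  have e1 : ⟪a, s⟫ = -(lI * A) := by
    rw [hs, inner_neg_right, real_inner_smul_right, hA]
  have e2 : ⟪b', h + s⟫ = ⟪b', h⟫ - lI * B := by
    rw [inner_add_right, hs, inner_neg_right, real_inner_smul_right, hB]; ring
  have e3 : ⟪b', s'⟫ = lI * B := by
    rw [hs', real_inner_smul_right, hB]
  have e4 : ⟪a, s' - h⟫ = lI * A - ⟪a, h⟫ := by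
    rw [inner_sub_right, hs', real_inner_smul_right, hA]
  rw [e1, hnorms, hquad] at desc1
  rw [e3, hnorms', hquad] at desc2
  rw [e2] at fo1
  rw [e4] at fo2
  have goal1 : ⟪e, h⟫ = ⟪a, h⟫ - ⟪b', h⟫ := by rw [he, inner_sub_left]
  rw [goal1]
  have hkey : lI * N = lI * A - lI * B := by rw [← hNAB]; ring
  have hfin : (1 / Lmax) * N = lI * N := by rw [hlI]; ring
  rw [hfin]
  linarith [desc1, desc2, fo1, fo2, hkey]

end Helpers

set_option maxHeartbeats 1000000 in
/-- single BC-RED update decreases the squared distance to a fixed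
point `x* ∈ zer(G)` when `x − x*` is supported on block `i`. -/
theorem bcred_single_update_decrease {b : ℕ} (n : Fin b → ℕ)
    (g : FullSpace n → ℝ) (D : FullSpace n → FullSpace n) (τ Lmax : ℝ)
    (hτ : 0 < τ) (hLmax : 0 < Lmax)
    (hg_conv : ConvexOn ℝ Set.univ g) (hg_diff : ContDiff ℝ 1 g)
    (hg_lip : ∀ i, BlockLipschitz n i (fun x => blockExt n i (gradient g x)) Lmax)
    (hD : ∀ i, BlockLipschitz n i (fun x => blockExt n i (D x)) 1)
    (G : FullSpace n → FullSpace n)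
    (hG : ∀ x, G x = gradient g x + τ • (x - D x))
    (xs : FullSpace n) (hxs : G xs = 0)
    (γ : ℝ) (hγ : 0 < γ) (hγ' : γ ≤ 1 / (Lmax + 2 * τ))
    (i : Fin b) (x : FullSpace n)
    (hsupp : ∃ hi : Blk n i, x = xs + blockInj n i hi) :
    ‖(x - γ • blockInj n i (blockExt n i (G x))) - xs‖ ^ 2
      ≤ ‖x - xs‖ ^ 2 - (γ / (Lmax + 2 * τ)) * ‖blockExt n i (G x)‖ ^ 2 := by
  obtain ⟨h, hxeq⟩ := hsupp
  have hgdiff : Differentiable ℝ g := hg_diff.differentiable one_ne_zero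
  set a := blockExt n i (gradient g x) with ha
  set b' := blockExt n i (gradient g xs) with hb'
  set e := a - b' with he
  set q := blockExt n i (G x) with hq
  set P : Blk n i := h - (blockExt n i (D x) - blockExt n i (D xs)) with hP
  -- decompose q
  have h1 : q = a + τ • (blockExt n i x - blockExt n i (D x)) := by
    simp [hq, ha, blockExt, hG x]
  have h2 : (0 : Blk n i) = b' + τ • (blockExt n i xs - blockExt n i (D xs)) := by
    have : blockExt n i (G xs) = 0 := by rw [hxs]; rfl
    rw [← this]
    simp [hb', blockExt, hG xs]
  have h3 : blockExt n i x = blockExt n i xs + h := by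
    rw [hxeq]; simp [blockExt, blockInj]
  have hqe : q = e + τ • P := by
    have step : e + τ • P
        = a + τ • (blockExt n i x - blockExt n i (D x))
          - (b' + τ • (blockExt n i xs - blockExt n i (D xs))) := by
      rw [h3, he, hP]
      module
    rw [step, ← h2, sub_zero, ← h1]
  -- cocoercivity of the gradient part (Baillon–Haddad)
  have hBH : (1 / Lmax) * ‖e‖ ^ 2 ≤ ⟪e, h⟫ := by
    have := block_BH' hgdiff hg_conv hLmax (hg_lip i) xs h
    rw [← hxeq] at this
    exact this
  -- cocoercivity of the denoiser part
  have hPco : ‖P‖ ^ 2 / 2 ≤ ⟪P, h⟫ := by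
    have hd := hD i xs h
    rw [← hxeq] at hd
    simp only [one_mul] at hd
    have hsub : blockExt n i (D x) - blockExt n i (D xs) = h - P := by rw [hP]; abel
    rw [hsub] at hd
    have hsq : ‖h - P‖ ^ 2 ≤ ‖h‖ ^ 2 := by
      nlinarith [norm_nonneg (h - P), norm_nonneg h]
    rw [norm_sub_sq_real] at hsq
    rw [real_inner_comm]
    nlinarith [hsq]
  -- combined cocoercivity of G_i
  have hLτ : 0 < Lmax + 2 * τ := by linarith
  have hqnorm : ‖q‖ ^ 2 = ‖e‖ ^ 2 + 2 * (τ * ⟪e, P⟫) + τ ^ 2 * ‖P‖ ^ 2 := by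
    rw [hqe, norm_add_sq_real, real_inner_smul_right, norm_smul, Real.norm_eq_abs,
      abs_of_pos hτ, mul_pow]
  have hqinner : ⟪q, h⟫ = ⟪e, h⟫ + τ * ⟪P, h⟫ := by
    rw [hqe, inner_add_left, real_inner_smul_left]
  have hLinv : Lmax * (1 / Lmax) = 1 := mul_one_div_cancel (ne_of_gt hLmax)
  have hS1 : ‖q‖ ^ 2 ≤ (Lmax + 2 * τ) * ((1 / Lmax) * ‖e‖ ^ 2 + τ / 2 * ‖P‖ ^ 2) := by
    have hcs : ⟪e, P⟫ ≤ ‖e‖ * ‖P‖ := real_inner_le_norm e P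
    have h4 : 2 * ‖e‖ * ‖P‖ ≤ 2 * (1 / Lmax) * ‖e‖ ^ 2 + Lmax / 2 * ‖P‖ ^ 2 := by
      have expand : 2 * (1 / Lmax) * ‖e‖ ^ 2 + Lmax / 2 * ‖P‖ ^ 2 - 2 * ‖e‖ * ‖P‖
          = (1 / (2 * Lmax)) * (2 * ‖e‖ - Lmax * ‖P‖) ^ 2 := by
        field_simp
        ring
      have pos : (0:ℝ) ≤ (1 / (2 * Lmax)) * (2 * ‖e‖ - Lmax * ‖P‖) ^ 2 := by positivity
      linarith [expand, pos]
    have h5 : 2 * τ * ⟪e, P⟫ ≤ τ * (2 * (1 / Lmax) * ‖e‖ ^ 2 + Lmax / 2 * ‖P‖ ^ 2) := by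
      nlinarith [mul_le_mul_of_nonneg_left hcs (le_of_lt hτ),
        mul_le_mul_of_nonneg_left h4 (le_of_lt hτ)]
    have hexp : (Lmax + 2 * τ) * ((1 / Lmax) * ‖e‖ ^ 2 + τ / 2 * ‖P‖ ^ 2)
        = ‖e‖ ^ 2 + τ * (2 * (1 / Lmax) * ‖e‖ ^ 2 + Lmax / 2 * ‖P‖ ^ 2) + τ ^ 2 * ‖P‖ ^ 2 := by
      field_simp
      ring
    rw [hqnorm, hexp]
    linarith [h5]
  have hS2 : (1 / Lmax) * ‖e‖ ^ 2 + τ / 2 * ‖P‖ ^ 2 ≤ ⟪q, h⟫ := by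
    rw [hqinner]
    nlinarith [hBH, hPco, hτ, mul_le_mul_of_nonneg_left hPco (le_of_lt hτ)]
  have hco : (1 / (Lmax + 2 * τ)) * ‖q‖ ^ 2 ≤ ⟪q, h⟫ := by
    have hb1 : (1 / (Lmax + 2 * τ)) * ‖q‖ ^ 2
        ≤ (1 / (Lmax + 2 * τ)) * ((Lmax + 2 * τ) * ((1 / Lmax) * ‖e‖ ^ 2 + τ / 2 * ‖P‖ ^ 2)) :=
      mul_le_mul_of_nonneg_left hS1 (by positivity)
    have hb2 : (1 / (Lmax + 2 * τ)) * ((Lmax + 2 * τ) * ((1 / Lmax) * ‖e‖ ^ 2 + τ / 2 * ‖P‖ ^ 2))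
        = (1 / Lmax) * ‖e‖ ^ 2 + τ / 2 * ‖P‖ ^ 2 := by
      field_simp
    rw [hb2] at hb1
    linarith [hS2]
  -- final algebra
  have hxm : x - γ • blockInj n i q - xs = blockInj n i (h - γ • q) := by
    rw [hxeq, blockInj_sub', blockInj_smul']
    abel
  have hxm2 : x - xs = blockInj n i h := by rw [hxeq]; abel
  rw [hxm, hxm2, norm_blockInj', norm_blockInj']
  rw [norm_sub_sq_real, real_inner_smul_right, norm_smul, Real.norm_eq_abs,
    abs_of_pos hγ, mul_pow]
  have hg1 : γ * ((1 / (Lmax + 2 * τ)) * ‖q‖ ^ 2) ≤ γ * ⟪q, h⟫ :=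
    mul_le_mul_of_nonneg_left hco (le_of_lt hγ)
  have hg2 : γ * ‖q‖ ^ 2 ≤ (1 / (Lmax + 2 * τ)) * ‖q‖ ^ 2 :=
    mul_le_mul_of_nonneg_right hγ' (sq_nonneg _)
  have hg3 : γ / (Lmax + 2 * τ) = γ * (1 / (Lmax + 2 * τ)) := by ring
  rw [hg3]
  have hcomm : ⟪h, q⟫ = ⟪q, h⟫ := real_inner_comm q h
  rw [hcomm]
  nlinarith [hg1, hg2, mul_le_mul_of_nonneg_left hg2 (le_of_lt hγ)]
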